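/- Let n ≥ 1, let L be a first-order language, M an L-structure, φ(y_0,…,y_{n-1},x) an L-formula with n+1 variable groups, let (I,<,R,P_0,…,P_n) be a random ordered (n+1)-partite (n+1)-uniform hypergraph, and suppose a sequence (a_g)_{g∈I} of tuples of M witnesses that φ encodes (I,R,P_0,…,P_n) in M (part P_i plugged into y_i for i < n and part P_n into x). Then the formula ψ_φ(z_0,…,z_n) := ⋁_{σ ∈ Sym({0,…,n})} φ(y^0_{σ(0)},…,y^{n-1}_{σ(n-1)}, x_{σ(n)}), where z_i = (y^0_i,…,y^{n-1}_i, x_i), encodes every finite (n+1)-uniform hypergraph in M. -/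

import Mathlib

open FirstOrder Language

universe u u' x y z

/-- An `(n+1)`-partite `(n+1)`-uniform hypergraph, presented by its parts and its set of
(cross) edges. -/
structure PartiteHG (n : ℕ) : Type (u + 1) where
  P : Fin (n + 1) → Type u
  E : (∀ i, P i) → Prop

/-- Insert a vertex `b` of part `j` into a choice of vertices for all other parts. -/
def insertPt {n : ℕ} {P : Fin (n + 1) → Type u} (j : Fin (n + 1)) (b : P j)
    (a : ∀ i, i ≠ j → P i) (i : Fin (n + 1)) : P i :=
  if h : i = j then cast (congrArg P h.symm) b else a i h

/-- A random ordered `(n+1)`-partite `(n+1)`-uniform hypergraph. -/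
structure RandomOrderedPartiteHG (n : ℕ) extends PartiteHG.{u} n where
  lt : ∀ i, P i → P i → Prop
  strictTotal : ∀ i, IsStrictTotalOrder (P i) (lt i)
  dense : ∀ (i) (x y : P i), lt i x y → ∃ z, lt i x z ∧ lt i z y
  noMax : ∀ (i) (x : P i), ∃ y, lt i x y
  noMin : ∀ (i) (x : P i), ∃ y, lt i y x
  nonempty : ∀ i, Nonempty (P i)
  random : ∀ (j : Fin (n + 1)) (A₀ A₁ : Set (∀ i, i ≠ j → P i)),
    A₀.Finite → A₁.Finite → Disjoint A₀ A₁ →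
    ∀ b₀ b₁ : P j, lt j b₀ b₁ →
      ∃ b : P j, lt j b₀ b ∧ lt j b b₁ ∧
        (∀ a ∈ A₀, E (insertPt j b a)) ∧ (∀ a ∈ A₁, ¬ E (insertPt j b a))

/-- An `(n+1)`-uniform hypergraph: a symmetric `(n+1)`-ary relation holding only on tuples of
pairwise distinct elements. -/
structure UniformHG (n : ℕ) : Type (u + 1) where
  G : Type u
  R : (Fin (n + 1) → G) → Prop
  symm : ∀ (v : Fin (n + 1) → G) (σ : Equiv.Perm (Fin (n + 1))), R v → R (v ∘ σ)
  distinct : ∀ v, R v → Function.Injective v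

/-- Finite disjunction of a list of formulas. -/
def bigOr {L : FirstOrder.Language.{x, y}} {α : Type*} : List (L.Formula α) → L.Formula α
  | [] => BoundedFormula.falsum
  | χ :: l => χ.not.imp (bigOr l)

/-- The relabeling of the variables of `φ(y₀, …, y_{n-1}, x)` corresponding to the substitution
`φ(y⁰_{σ 0}, …, y^{n-1}_{σ (n-1)}, x_{σ n})`, where `z i = (y⁰_i, …, y^{n-1}_i, x_i)` is the
`i`-th of the `n+1` new variable groups. -/
def groupMap {n d₀ : ℕ} {d : Fin n → ℕ} (σ : Equiv.Perm (Fin (n + 1))) :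
    ((Σ j : Fin n, Fin (d j)) ⊕ Fin d₀) →
      Fin (n + 1) × ((Σ j : Fin n, Fin (d j)) ⊕ Fin d₀)
  | Sum.inl p => (σ p.1.castSucc, Sum.inl p)
  | Sum.inr k => (σ (Fin.last n), Sum.inr k)

/-- The formula `φ_σ(z₀, …, z_n) = φ(y⁰_{σ 0}, …, y^{n-1}_{σ (n-1)}, x_{σ n})`. -/
def phiSigma {L : FirstOrder.Language.{x, y}} {n d₀ : ℕ} {d : Fin n → ℕ}
    (φ : L.Formula ((Σ j : Fin n, Fin (d j)) ⊕ Fin d₀)) (σ : Equiv.Perm (Fin (n + 1))) :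
    L.Formula (Fin (n + 1) × ((Σ j : Fin n, Fin (d j)) ⊕ Fin d₀)) :=
  Formula.relabel (groupMap σ) φ

/-- The symmetrization `ψ_φ(z₀, …, z_n) = ⋁_{σ ∈ Sym(n+1)} φ_σ(z₀, …, z_n)`. -/
noncomputable def psiPhi {L : FirstOrder.Language.{x, y}} {n d₀ : ℕ} {d : Fin n → ℕ}
    (φ : L.Formula ((Σ j : Fin n, Fin (d j)) ⊕ Fin d₀)) :
    L.Formula (Fin (n + 1) × ((Σ j : Fin n, Fin (d j)) ⊕ Fin d₀)) :=
  bigOr (((Finset.univ : Finset (Equiv.Perm (Fin (n + 1)))).toList).map (phiSigma φ))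

/-! ### Auxiliary lemmas -/

lemma realize_bigOr {L : FirstOrder.Language.{x, y}} {M : Type z} [L.Structure M] {α : Type*}
    (l : List (L.Formula α)) (v : α → M) :
    (bigOr l).Realize v ↔ ∃ χ ∈ l, χ.Realize v := by
  induction l with
  | nil =>
    simp only [bigOr, List.not_mem_nil, false_and, exists_false, iff_false]
    exact fun h => h
  | cons χ l ih =>
    have h1 : (bigOr (χ :: l)).Realize v ↔ (¬ χ.Realize v → (bigOr l).Realize v) := by
      simp [bigOr, Formula.Realize]
    rw [h1, ih]
    constructor
    · intro hi
      by_cases hχ : χ.Realize v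
      · exact ⟨χ, List.mem_cons_self, hχ⟩
      · obtain ⟨ρ, hρ, h2⟩ := hi hχ
        exact ⟨ρ, List.mem_cons_of_mem _ hρ, h2⟩
    · rintro ⟨ρ, hρ, h2⟩ hχ
      rcases List.mem_cons.mp hρ with h | h
      · exact absurd (h ▸ h2) hχ
      · exact ⟨ρ, h, h2⟩

/-- An increasing sequence in part `i` of `H`. -/
noncomputable def seqQ {n : ℕ} (H : RandomOrderedPartiteHG.{u} n) (i : Fin (n + 1)) :
    ℕ → H.P i
  | 0 => Classical.choice (H.nonempty i)
  | (k + 1) => Classical.choose (H.noMax i (seqQ H i k))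

lemma seqQ_succ {n : ℕ} (H : RandomOrderedPartiteHG.{u} n) (i : Fin (n + 1)) (k : ℕ) :
    H.lt i (seqQ H i k) (seqQ H i (k + 1)) :=
  Classical.choose_spec (H.noMax i (seqQ H i k))

lemma seqQ_mono {n : ℕ} (H : RandomOrderedPartiteHG.{u} n) (i : Fin (n + 1)) {k k' : ℕ}
    (h : k < k') : H.lt i (seqQ H i k) (seqQ H i k') := by
  have htr : ∀ a b c, H.lt i a b → H.lt i b c → H.lt i a c := (H.strictTotal i).trans
  induction k' with
  | zero => omega
  | succ k' ih =>
    rcases Nat.lt_succ_iff_lt_or_eq.mp h with h' | h'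
    · exact htr _ _ _ (ih h') (seqQ_succ H i k')
    · subst h'; exact seqQ_succ H i k

/-- Position of a (vertex, part) pair in the enumeration. -/
def posT {m n' : ℕ} (t : Fin m × Fin n') : ℕ := t.1.1 * n' + t.2.1

lemma posT_inj {m n' : ℕ} : Function.Injective (posT (m := m) (n' := n')) := by
  have key : ∀ (k i : ℕ), i < n' → ((k * n' + i) / n' = k ∧ (k * n' + i) % n' = i) := by
    intro k i hi
    have hpos : 0 < n' := Nat.pos_of_ne_zero (by omega)
    constructor
    · rw [Nat.mul_comm, Nat.add_comm, Nat.add_mul_div_left _ _ hpos, Nat.div_eq_of_lt hi,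
        Nat.zero_add]
    · rw [Nat.mul_comm, Nat.add_comm, Nat.add_mul_mod_self_left, Nat.mod_eq_of_lt hi]
  rintro ⟨k, i⟩ ⟨k', i'⟩ hp
  obtain ⟨h1, h2⟩ := key k.1 i.1 i.2
  obtain ⟨h1', h2'⟩ := key k'.1 i'.1 i'.2
  have hk : k.1 = k'.1 := by rw [← h1, ← h1']; exact congrArg (· / n') hp
  have hi : i.1 = i'.1 := by rw [← h2, ← h2']; exact congrArg (· % n') hp
  exact Prod.ext (Fin.ext hk) (Fin.ext hi)

/-- The interval constraint: the value at `(k, i)` lies in the `k`-th interval of part `i`. -/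
def inIv {n : ℕ} (H : RandomOrderedPartiteHG.{u} n) {m : ℕ} (t : Fin m × Fin (n + 1))
    (b : H.P t.2) : Prop :=
  H.lt t.2 (seqQ H t.2 t.1.1) b ∧ H.lt t.2 b (seqQ H t.2 (t.1.1 + 1))

lemma inIv_inj {n : ℕ} (H : RandomOrderedPartiteHG.{u} n) {m : ℕ} (i : Fin (n + 1))
    (k k' : Fin m) {b b' : H.P i} (hb : inIv H (k, i) b) (hb' : inIv H (k', i) b')
    (hbb : b = b') : k = k' := by
  have htr : ∀ a b c, H.lt i a b → H.lt i b c → H.lt i a c := (H.strictTotal i).trans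
  have hirr : ∀ a, ¬ H.lt i a a := (H.strictTotal i).irrefl
  have main : ∀ (k k' : Fin m) (b b' : H.P i), k.1 < k'.1 →
      inIv H (k, i) b → inIv H (k', i) b' → H.lt i b b' := by
    intro k k' b b' hlt hb hb'
    have h1 : H.lt i b (seqQ H i k'.1) := by
      rcases Nat.lt_or_ge (k.1 + 1) k'.1 with h2 | h2
      · exact htr _ _ _ hb.2 (seqQ_mono H i h2)
      · have he : k.1 + 1 = k'.1 := by omega
        rw [← he]; exact hb.2
    exact htr _ _ _ h1 hb'.1
  by_contra hkk
  have hne : k.1 ≠ k'.1 := fun h => hkk (Fin.ext h)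
  rcases Nat.lt_or_ge k.1 k'.1 with h | h
  · exact hirr b (hbb ▸ main k k' b b' h hb hb')
  · have h' : k'.1 < k.1 := by omega
    exact hirr b' (hbb ▸ main k' k b' b h' hb' hb)

theorem psi_encodes_uniform {n : ℕ} (hn : 1 ≤ n)
    {L : FirstOrder.Language.{x, y}} {M : Type z} [L.Structure M]
    {d₀ : ℕ} {d : Fin n → ℕ} (φ : L.Formula ((Σ j : Fin n, Fin (d j)) ⊕ Fin d₀))
    (H : RandomOrderedPartiteHG.{u} n)
    (aY : (j : Fin n) → H.P j.castSucc → Fin (d j) → M)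
    (aX : H.P (Fin.last n) → Fin d₀ → M)
    (hEnc : ∀ g : ∀ i, H.P i,
      ((φ.Realize (Sum.elim
        (fun p : Σ j : Fin n, Fin (d j) => aY p.1 (g p.1.castSucc) p.2)
        (aX (g (Fin.last n))))) ↔ H.E g)) :
    ∀ G : UniformHG.{u'} n, Finite G.G →
      ∃ b : G.G → ((Σ j : Fin n, Fin (d j)) ⊕ Fin d₀) → M,
        ∀ h : Fin (n + 1) → G.G,
          (((psiPhi φ).Realize fun p => b (h p.1) p.2) ↔ G.R h) := by
  classical
  intro G hG
  have : Fintype G.G := Fintype.ofFinite G.G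
  set m := Fintype.card G.G with hm
  let e : G.G ≃ Fin m := Fintype.equivFin G.G
  -- key inductive construction
  have key : ∀ s : ℕ, ∃ c : ∀ t : Fin m × Fin (n + 1), H.P t.2,
      (∀ t, posT t < s → inIv H t (c t)) ∧
      (∀ v : Fin (n + 1) → Fin m, (∀ j, posT (v j, j) < s) →
        (H.E (fun j => c (v j, j)) ↔ G.R (fun j => e.symm (v j)))) := by
    intro s
    induction s with
    | zero =>
      refine ⟨fun t => Classical.choice (H.nonempty t.2), fun t ht => absurd ht (by omega),
        fun v hv => absurd (hv 0) (by omega)⟩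
    | succ s ih =>
      obtain ⟨c, hIv, hE⟩ := ih
      by_cases hex : ∃ t : Fin m × Fin (n + 1), posT t = s
      case neg =>
        refine ⟨c, ?_, ?_⟩
        · intro t ht
          refine hIv t ?_
          have : posT t ≠ s := fun h => hex ⟨t, h⟩
          omega
        · intro v hv
          refine hE v fun j => ?_
          have h1 := hv j
          have : posT (v j, j) ≠ s := fun h => hex ⟨(v j, j), h⟩
          omega
      case pos =>
        obtain ⟨⟨k, i⟩, hki⟩ := hex
        -- the two constraint sets
        set A₀ : Set (∀ j, j ≠ i → H.P j) :=
          { a | ∃ v : Fin (n + 1) → Fin m, (v i = k ∧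
              ∀ j (hj : j ≠ i), posT ((v j, j) : Fin m × Fin (n + 1)) < s ∧ a j hj = c (v j, j)) ∧
              G.R (fun j => e.symm (v j)) } with hA₀def
        set A₁ : Set (∀ j, j ≠ i → H.P j) :=
          { a | ∃ v : Fin (n + 1) → Fin m, (v i = k ∧
              ∀ j (hj : j ≠ i), posT ((v j, j) : Fin m × Fin (n + 1)) < s ∧ a j hj = c (v j, j)) ∧
              ¬ G.R (fun j => e.symm (v j)) } with hA₁def
        have hWuniq : ∀ (v v' : Fin (n + 1) → Fin m) (a : ∀ j, j ≠ i → H.P j),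
            (v i = k ∧ ∀ j (hj : j ≠ i), posT ((v j, j) : Fin m × Fin (n + 1)) < s ∧
              a j hj = c (v j, j)) →
            (v' i = k ∧ ∀ j (hj : j ≠ i), posT ((v' j, j) : Fin m × Fin (n + 1)) < s ∧
              a j hj = c (v' j, j)) → v = v' := by
          intro v v' a hv hv'
          funext j
          by_cases hj : j = i
          · subst hj; rw [hv.1, hv'.1]
          · have h1 := hv.2 j hj
            have h2 := hv'.2 j hj
            have hc : c (v j, j) = c (v' j, j) := by rw [← h1.2, ← h2.2]
            exact inIv_inj H j (v j) (v' j) (hIv (v j, j) h1.1) (hIv (v' j, j) h2.1) hc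
        have hsub : ∀ (q : Prop → Prop) (A : Set (∀ j, j ≠ i → H.P j)),
            (∀ a ∈ A, ∃ v : Fin (n + 1) → Fin m, ∀ j (hj : j ≠ i), a j hj = c (v j, j)) →
            A.Finite := by
          intro q A hA
          refine Set.Finite.subset
            (Set.finite_range (fun v : Fin (n + 1) → Fin m =>
              (fun j hj => c (v j, j) : ∀ j, j ≠ i → H.P j))) ?_
          intro a ha
          obtain ⟨v, hv⟩ := hA a ha
          exact ⟨v, by funext j; funext hj; exact (hv j hj).symm⟩
        have hfin0 : A₀.Finite := by
          refine hsub id A₀ ?_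
          rintro a ⟨v, ⟨_, hv⟩, _⟩
          exact ⟨v, fun j hj => (hv j hj).2⟩
        have hfin1 : A₁.Finite := by
          refine hsub id A₁ ?_
          rintro a ⟨v, ⟨_, hv⟩, _⟩
          exact ⟨v, fun j hj => (hv j hj).2⟩
        have hdisj : Disjoint A₀ A₁ := by
          rw [Set.disjoint_left]
          rintro a ⟨v, hW, hR⟩ ⟨v', hW', hR'⟩
          exact hR' ((hWuniq v v' a hW hW') ▸ hR)
        obtain ⟨b, hb0, hb1, hA0, hA1⟩ := H.random i A₀ A₁ hfin0 hfin1 hdisj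
          (seqQ H i k.1) (seqQ H i (k.1 + 1)) (seqQ_succ H i k.1)
        refine ⟨Function.update c (k, i) b, ?_, ?_⟩
        · intro t ht
          by_cases h : t = (k, i)
          · subst h
            rw [Function.update_self]
            exact ⟨hb0, hb1⟩
          · have hne : posT t ≠ s := fun hh => h (posT_inj (hh.trans hki.symm))
            rw [Function.update_of_ne h]
            exact hIv t (by omega)
        · intro v hv
          by_cases hvi : ∀ j, posT ((v j, j) : Fin m × Fin (n + 1)) < s
          · have heq : (fun j => Function.update c (k, i) b (v j, j)) =
                (fun j => c (v j, j)) := by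
              funext j
              refine Function.update_of_ne ?_ _ _
              intro hh
              have h1 := hvi j
              rw [hh, hki] at h1
              omega
            rw [heq]
            exact hE v hvi
          · push_neg at hvi
            obtain ⟨j₀, hj₀⟩ := hvi
            have hps : posT ((v j₀, j₀) : Fin m × Fin (n + 1)) = s := by
              have := hv j₀; omega
            have heq : ((v j₀, j₀) : Fin m × Fin (n + 1)) = (k, i) :=
              posT_inj (hps.trans hki.symm)
            have hji : j₀ = i := congrArg Prod.snd heq
            subst hji
            have hvk : v j₀ = k := congrArg Prod.fst heq
            have ha : ∀ j (hj : j ≠ j₀), posT ((v j, j) : Fin m × Fin (n + 1)) < s := by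
              intro j hj
              have h1 := hv j
              have h2 : posT ((v j, j) : Fin m × Fin (n + 1)) ≠ s := by
                intro hc
                exact hj (congrArg Prod.snd (posT_inj (hc.trans hki.symm)))
              omega
            have hWa : (v j₀ = k ∧ ∀ j (hj : j ≠ j₀),
                posT ((v j, j) : Fin m × Fin (n + 1)) < s ∧
                (fun j _ => c (v j, j) : ∀ j, j ≠ j₀ → H.P j) j hj = c (v j, j)) :=
              ⟨hvk, fun j hj => ⟨ha j hj, rfl⟩⟩
            have hfun : (fun j => Function.update c (k, j₀) b (v j, j)) =
                insertPt j₀ b (fun j _ => c (v j, j)) := by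
              funext j
              by_cases hj : j = j₀
              · subst hj
                have h5 : Function.update c (k, j) b (v j, j) = b := by
                  rw [hvk]; exact Function.update_self _ _ _
                rw [h5]
                simp [insertPt]
              · have hne : ((v j, j) : Fin m × Fin (n + 1)) ≠ (k, j₀) :=
                  fun hh => hj (congrArg Prod.snd hh)
                rw [Function.update_of_ne hne]
                simp [insertPt, hj]
            rw [hfun]
            constructor
            · intro hEb
              by_contra hR
              exact hA1 (fun j _ => c (v j, j)) ⟨v, hWa, hR⟩ hEb
            · intro hR
              exact hA0 (fun j _ => c (v j, j)) ⟨v, hWa, hR⟩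
  -- final assembly
  obtain ⟨c, -, hcE⟩ := key (m * (n + 1))
  have hall : ∀ (k : Fin m) (i : Fin (n + 1)),
      posT ((k, i) : Fin m × Fin (n + 1)) < m * (n + 1) := by
    intro k i
    have hk := k.2
    have hi := i.2
    calc k.1 * (n + 1) + i.1 < k.1 * (n + 1) + (n + 1) := by omega
      _ = (k.1 + 1) * (n + 1) := by ring
      _ ≤ m * (n + 1) := Nat.mul_le_mul_right _ hk
  refine ⟨fun h0 => Sum.elim (fun p : Σ j : Fin n, Fin (d j) =>
      aY p.1 (c (e h0, p.1.castSucc)) p.2) (fun k0 => aX (c (e h0, Fin.last n)) k0), ?_⟩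
  intro h
  have hσ : ∀ σ : Equiv.Perm (Fin (n + 1)),
      ((phiSigma φ σ).Realize fun p : Fin (n + 1) × ((Σ j : Fin n, Fin (d j)) ⊕ Fin d₀) =>
        (fun h0 => Sum.elim (fun p : Σ j : Fin n, Fin (d j) =>
          aY p.1 (c (e h0, p.1.castSucc)) p.2)
          (fun k0 => aX (c (e h0, Fin.last n)) k0)) (h p.1) p.2) ↔
      G.R (fun j => h (σ j)) := by
    intro σ
    rw [phiSigma, Formula.realize_relabel]
    have hfeq : (((fun p : Fin (n + 1) × ((Σ j : Fin n, Fin (d j)) ⊕ Fin d₀) =>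
        (fun h0 => Sum.elim (fun p : Σ j : Fin n, Fin (d j) =>
          aY p.1 (c (e h0, p.1.castSucc)) p.2)
          (fun k0 => aX (c (e h0, Fin.last n)) k0)) (h p.1) p.2)) ∘ groupMap σ) =
        Sum.elim (fun p : Σ j : Fin n, Fin (d j) =>
          aY p.1 ((fun i0 => c (e (h (σ i0)), i0)) p.1.castSucc) p.2)
          (aX ((fun i0 => c (e (h (σ i0)), i0)) (Fin.last n))) := by
      funext p
      rcases p with p | k0
      · simp [groupMap]
      · simp [groupMap]
    rw [hfeq, hEnc (fun i0 => c (e (h (σ i0)), i0)),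
      hcE (fun j => e (h (σ j))) (fun j => hall _ _)]
    constructor
    · intro hR
      have : (fun j => e.symm (e (h (σ j)))) = fun j => h (σ j) := by
        funext j; simp
      rwa [this] at hR
    · intro hR
      have : (fun j => e.symm (e (h (σ j)))) = fun j => h (σ j) := by
        funext j; simp
      rwa [this]
  rw [psiPhi, realize_bigOr]
  constructor
  · rintro ⟨χ, hχ, hr⟩
    obtain ⟨σ, -, rfl⟩ := List.mem_map.mp hχ
    have hRσ := (hσ σ).mp hr
    have h2 := G.symm _ σ⁻¹ hRσ
    have h3 : ((fun j => h (σ j)) ∘ ⇑σ⁻¹) = h := by funext j; simp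
    rwa [h3] at h2
  · intro hR
    refine ⟨phiSigma φ 1, List.mem_map.mpr
      ⟨1, Finset.mem_toList.mpr (Finset.mem_univ _), rfl⟩, ?_⟩
    rw [hσ 1]
    simpa using hR
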